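/- The automorphism group scheme Aut over 𝒪 of the standard complete periodic lattice chain for GL_n is formally smooth: for any 𝒪-algebra R with nilpotent ideal J ⊂ R, every automorphism of the lattice chain diagram Λ_• ⊗_𝒪 (R/J) lifts to an automorphism of Λ_• ⊗_𝒪 R. -/

import Mathlib

open scoped MatrixGroups

open Fin.NatCast Fin.CommRing in
/-- Key cyclic combinatorial fact about `Fin n`: membership of `i+1` in the
half-open cyclic arc `(k, j]` in terms of membership of `i`. -/
lemma stmt7_arc_succ {n : ℕ} [NeZero n] (i j k : Fin n) (hjk : j ≠ k) :
    ((i + 1 ≠ k ∧ ((i + 1 - k : Fin n) : ℕ) ≤ ((j - k : Fin n) : ℕ)) ↔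
      (i = k ∨ (i ≠ k ∧ ((i - k : Fin n) : ℕ) ≤ ((j - k : Fin n) : ℕ) ∧ i ≠ j))) := by
  have hz : ∀ a b : Fin n, a = b ↔ ((a - b : Fin n) : ℕ) = 0 := by
    intro a b
    rw [← sub_eq_zero]
    constructor
    · intro h; rw [h]; simp
    · intro h; exact Fin.ext h
  have hu : ((j - k : Fin n) : ℕ) ≠ 0 := by
    intro h; exact hjk ((hz j k).2 h)
  have hn : 2 ≤ n := by
    have h1 := (j - k : Fin n).isLt
    omega
  have hone : ((1 : Fin n) : ℕ) = 1 := by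
    rw [show (1 : Fin n) = ((1 : ℕ) : Fin n) by simp, Fin.val_natCast]
    exact Nat.mod_eq_of_lt (by omega)
  have hkey : (i + 1 - k : Fin n) = (i - k) + 1 := by ring
  have hadd : ((i + 1 - k : Fin n) : ℕ) = (((i - k : Fin n) : ℕ) + 1) % n := by
    rw [hkey, Fin.val_add, hone]
  have hij : i = j ↔ ((i - k : Fin n) : ℕ) = ((j - k : Fin n) : ℕ) := by
    rw [← sub_left_inj (a := k)]
    exact ⟨fun h => by rw [h], fun h => Fin.ext h⟩
  have hik := hz i k
  have hik1 : i + 1 = k ↔ (((i - k : Fin n) : ℕ) + 1) % n = 0 := by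
    rw [hz (i + 1) k, hadd]
  have hx := (i - k : Fin n).isLt
  have hu2 := (j - k : Fin n).isLt
  rw [hadd]
  have e1 : ((i - k : Fin n) : ℕ) = 0 ↔ i = k := (hik).symm
  have e2 : ((i - k : Fin n) : ℕ) = ((j - k : Fin n) : ℕ) ↔ i = j := (hij).symm
  rcases Nat.lt_or_ge (((i - k : Fin n) : ℕ) + 1) n with h | h
  · rw [Nat.mod_eq_of_lt h] at hik1 ⊢
    constructor
    · rintro ⟨h1, h2⟩
      by_cases hc : i = k
      · exact Or.inl hc
      · have hc' : ((i - k : Fin n) : ℕ) ≠ 0 := fun hx0 => hc (e1.1 hx0)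
        refine Or.inr ⟨hc, by omega, fun hcc => ?_⟩
        have := e2.2 hcc
        omega
    · rintro (h1 | ⟨h1, h2, h3⟩)
      · have h1' : ((i - k : Fin n) : ℕ) = 0 := e1.2 h1
        refine ⟨fun hc => ?_, by omega⟩
        rw [hik1] at hc
        omega
      · have h1' : ((i - k : Fin n) : ℕ) ≠ 0 := fun hx0 => h1 (e1.1 hx0)
        have h3' : ((i - k : Fin n) : ℕ) ≠ ((j - k : Fin n) : ℕ) := fun hx0 => h3 (e2.1 hx0)
        refine ⟨fun hc => ?_, by omega⟩
        rw [hik1] at hc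
        omega
  · have hsum : ((i - k : Fin n) : ℕ) + 1 = n := by omega
    rw [hsum, Nat.mod_self] at hik1 ⊢
    constructor
    · rintro ⟨h1, _⟩
      exact absurd (hik1.2 rfl) h1
    · rintro (h1 | ⟨h1, h2, h3⟩)
      · have h1' : ((i - k : Fin n) : ℕ) = 0 := e1.2 h1
        omega
      · have h3' : ((i - k : Fin n) : ℕ) ≠ ((j - k : Fin n) : ℕ) := fun hx0 => h3 (e2.1 hx0)
        omega

/-- The automorphism group scheme `Aut` over a complete discrete
valuation ring `𝒪` of the standard complete periodic lattice chain for `GL_n`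
is formally smooth: for any `𝒪`-algebra `R` with a nilpotent ideal `J ⊆ R`,
every automorphism of the chain `Λ_• ⊗ (R/J)` lifts to an automorphism of
`Λ_• ⊗ R`.  Each `Λ_i` is identified with `𝒪ⁿ`, the transition maps being the
diagonal matrices `m_i = diag(1, …, π, …, 1)` (with `π` in the `i`-th place,
cyclically); an automorphism of the chain over `R` is a tuple
`(g_i)_{i ∈ ℤ/n}` of invertible matrices with `g_{i+1} m_i = m_i g_i`. -/
theorem stmt_7
    (O : Type*) [CommRing O] [IsDomain O] [IsDiscreteValuationRing O]
    [IsAdicComplete (IsLocalRing.maximalIdeal O) O]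
    (π : O) (hπ : Irreducible π)
    {n : ℕ} [NeZero n]
    (R : Type*) [CommRing R] [Algebra O R]
    (J : Ideal R) (hJ : ∃ k : ℕ, J ^ k = ⊥)
    (M : Fin n → Matrix (Fin n) (Fin n) R)
    (hM : ∀ i : Fin n,
      M i = Matrix.diagonal fun j => if j = i then algebraMap O R π else 1)
    (g0 : Fin n → GL (Fin n) (R ⧸ J))
    (hg0 : ∀ i : Fin n,
      (g0 (i + 1) : Matrix (Fin n) (Fin n) (R ⧸ J)) * (M i).map (Ideal.Quotient.mk J)
        = (M i).map (Ideal.Quotient.mk J) * (g0 i : Matrix (Fin n) (Fin n) (R ⧸ J))) :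
    ∃ g : Fin n → GL (Fin n) R,
      (∀ i : Fin n,
        (g (i + 1) : Matrix (Fin n) (Fin n) R) * M i
          = M i * (g i : Matrix (Fin n) (Fin n) R)) ∧
      ∀ i : Fin n,
        ((g i : Matrix (Fin n) (Fin n) R)).map (Ideal.Quotient.mk J)
          = (g0 i : Matrix (Fin n) (Fin n) (R ⧸ J)) := by
  open Fin.NatCast Fin.CommRing in classical
  obtain ⟨K, hK⟩ := hJ
  set mk : R →+* R ⧸ J := Ideal.Quotient.mk J with hmk
  set π' : R := algebraMap O R π with hπ'
  choose s hs using Ideal.Quotient.mk_surjective (I := J)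
  set v : Fin n → Fin n → ℕ := fun j k => ((j - k : Fin n) : ℕ) with hv
  set E : Fin n → Fin n → Fin n → R ⧸ J :=
    fun i j k => (g0 i : Matrix (Fin n) (Fin n) (R ⧸ J)) j k with hE
  -- entrywise commutation relation over R ⧸ J
  have key : ∀ i j k : Fin n,
      E (i + 1) j k * (if k = i then mk π' else 1)
        = (if j = i then mk π' else 1) * E i j k := by
    intro i j k
    have h := hg0 i
    rw [hM i, Matrix.diagonal_map (by simp)] at h
    have h2 := congrFun (congrFun h j) k
    simpa [Matrix.mul_diagonal, Matrix.diagonal_mul, apply_ite mk] using h2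
  -- basic facts about Fin subtraction vs equality
  have hz : ∀ a b : Fin n, a = b ↔ ((a - b : Fin n) : ℕ) = 0 := by
    intro a b
    rw [← sub_eq_zero]
    constructor
    · intro h; rw [h]; simp
    · intro h; exact Fin.ext h
  have heq_iff : ∀ (j k : Fin n) (t : ℕ), t < n →
      (j = k + (t : Fin n) ↔ v j k = t) := by
    intro j k t ht
    constructor
    · intro h
      subst h
      show ((k + (t : Fin n) - k : Fin n) : ℕ) = t
      rw [show (k + (t : Fin n) - k : Fin n) = (t : Fin n) by ring, Fin.val_natCast,
        Nat.mod_eq_of_lt ht]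
    · intro h
      have h2 : (j - k : Fin n) = (t : Fin n) := by
        rw [← h]
        exact (Fin.cast_val_eq_self _).symm
      have h3 : j = k + (j - k) := by ring
      rw [h3, h2]
  have hselfne : ∀ (k : Fin n) (t : ℕ), 1 ≤ t → t < n → k + (t : Fin n) ≠ k := by
    intro k t ht1 htn hc
    have h3 : (t : Fin n) = 0 := add_left_cancel (hc.trans (add_zero k).symm)
    have h4 : t % n = 0 := by
      rw [← Fin.val_natCast t n, h3]
      rfl
    rw [Nat.mod_eq_of_lt htn] at h4
    omega
  -- cyclic propagation of entries, off-diagonal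
  have cyc : ∀ (j k : Fin n), j ≠ k → ∀ t : ℕ, 1 ≤ t → t ≤ n →
      E (k + (t : Fin n)) j k
        = if t ≤ v j k then E (k + 1) j k else mk π' * E (k + 1) j k := by
    intro j k hjk t
    induction t with
    | zero => intro h1 _; exact absurd h1 (by omega)
    | succ t ih =>
      intro h1 h2
      by_cases ht : t = 0
      · subst ht
        have hne : v j k ≠ 0 := fun hc => hjk ((hz j k).2 hc)
        rw [if_pos (by omega)]
        norm_num
      · have ht1 : 1 ≤ t := by omega
        have ht2 : t ≤ n := by omega
        have htn : t < n := by omega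
        have ihe := ih ht1 ht2
        have hi_ne : k + (t : Fin n) ≠ k := hselfne k t ht1 htn
        have hk := key (k + (t : Fin n)) j k
        rw [if_neg (fun hc => hi_ne hc.symm), mul_one] at hk
        have hcast : k + (((t + 1 : ℕ)) : Fin n) = (k + (t : Fin n)) + 1 := by
          push_cast; ring
        rw [hcast]
        by_cases hji : j = k + (t : Fin n)
        · have hvt : v j k = t := (heq_iff j k t htn).1 hji
          rw [if_pos hji] at hk
          rw [hk, if_neg (by omega), ihe, if_pos (by omega)]
        · have hvt : v j k ≠ t := fun hc => hji ((heq_iff j k t htn).2 hc)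
          rw [if_neg hji, one_mul] at hk
          rw [hk, ihe]
          by_cases hle : t ≤ v j k
          · rw [if_pos hle, if_pos (by omega)]
          · rw [if_neg hle, if_neg (by omega)]
  -- cyclic propagation, diagonal
  have cycD : ∀ (j : Fin n) (t : ℕ), 1 ≤ t → t ≤ n →
      E (j + (t : Fin n)) j j = E (j + 1) j j := by
    intro j t
    induction t with
    | zero => intro h1 _; exact absurd h1 (by omega)
    | succ t ih =>
      intro h1 h2
      by_cases ht : t = 0
      · subst ht; norm_num
      · have ht1 : 1 ≤ t := by omega
        have ht2 : t ≤ n := by omega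
        have htn : t < n := by omega
        have hi_ne : j + (t : Fin n) ≠ j := hselfne j t ht1 htn
        have hk := key (j + (t : Fin n)) j j
        rw [if_neg (fun hc : j = j + (t : Fin n) => hi_ne hc.symm),
          mul_one, one_mul] at hk
        have hcast : j + (((t + 1 : ℕ)) : Fin n) = (j + (t : Fin n)) + 1 := by
          push_cast; ring
        rw [hcast, hk]
        exact ih ht1 ht2
  -- evaluation at an arbitrary index: diagonal
  have diagAll : ∀ (i j : Fin n), E i j j = E (j + 1) j j := by
    intro i j
    by_cases hij : i = j
    · subst hij
      have h2 : i + ((n : ℕ) : Fin n) = i := by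
        rw [Fin.natCast_self, add_zero]
      have h3 := cycD i n (Nat.one_le_iff_ne_zero.2 (NeZero.ne n)) le_rfl
      rwa [h2] at h3
    · have hne : ((i - j : Fin n) : ℕ) ≠ 0 := fun hc => hij ((hz i j).2 hc)
      have hlt := (i - j : Fin n).isLt
      have h2 : j + ((((i - j : Fin n) : ℕ)) : Fin n) = i := by
        rw [Fin.cast_val_eq_self]
        exact add_sub_cancel j i
      rw [← h2]
      exact cycD j ((i - j : Fin n) : ℕ) (by omega) (by omega)
  -- evaluation at an arbitrary index: off-diagonal
  have offAll : ∀ (i j k : Fin n), j ≠ k →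
      E i j k = if (i ≠ k ∧ ((i - k : Fin n) : ℕ) ≤ v j k)
        then E (k + 1) j k else mk π' * E (k + 1) j k := by
    intro i j k hjk
    have hvlt : v j k < n := (j - k : Fin n).isLt
    by_cases hik : i = k
    · subst hik
      have h2 : i + ((n : ℕ) : Fin n) = i := by
        rw [Fin.natCast_self, add_zero]
      have h3 := cyc j i hjk n (Nat.one_le_iff_ne_zero.2 (NeZero.ne n)) le_rfl
      rw [h2] at h3
      rw [h3, if_neg (by omega), if_neg (by simp)]
    · have hne : ((i - k : Fin n) : ℕ) ≠ 0 := fun hc => hik ((hz i k).2 hc)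
      have hlt := (i - k : Fin n).isLt
      have h2 : k + ((((i - k : Fin n) : ℕ)) : Fin n) = i := by
        rw [Fin.cast_val_eq_self]
        exact add_sub_cancel k i
      have h3 := cyc j k hjk ((i - k : Fin n) : ℕ) (by omega) (by omega)
      rw [h2] at h3
      rw [h3]
      by_cases hle : ((i - k : Fin n) : ℕ) ≤ v j k
      · rw [if_pos hle, if_pos ⟨hik, hle⟩]
      · rw [if_neg hle, if_neg (by tauto)]
  -- the lifted matrices
  set G : Fin n → Matrix (Fin n) (Fin n) R := fun i => Matrix.of fun j k =>
    if j = k then s (E (j + 1) j j)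
    else if (i ≠ k ∧ ((i - k : Fin n) : ℕ) ≤ v j k)
      then s (E (k + 1) j k) else π' * s (E (k + 1) j k) with hG
  -- reduction property
  have hred : ∀ i, (G i).map mk = (g0 i : Matrix (Fin n) (Fin n) (R ⧸ J)) := by
    intro i
    ext j k
    show mk (G i j k) = E i j k
    by_cases hjk : j = k
    · subst hjk
      show mk (if j = j then s (E (j + 1) j j) else _) = E i j j
      rw [if_pos rfl, hs, diagAll i j]
    · show mk (if j = k then _ else if (i ≠ k ∧ ((i - k : Fin n) : ℕ) ≤ v j k)
        then s (E (k + 1) j k) else π' * s (E (k + 1) j k)) = E i j k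
      rw [if_neg hjk, offAll i j k hjk]
      by_cases hc : (i ≠ k ∧ ((i - k : Fin n) : ℕ) ≤ v j k)
      · rw [if_pos hc, if_pos hc, hs]
      · rw [if_neg hc, if_neg hc, map_mul, hs]
  -- commutation property
  have hcomm : ∀ i, G (i + 1) * M i = M i * G i := by
    intro i
    ext j k
    rw [hM i, Matrix.mul_diagonal, Matrix.diagonal_mul]
    by_cases hjk : j = k
    · subst hjk
      show (if j = j then s (E (j + 1) j j) else _) * _
        = _ * (if j = j then s (E (j + 1) j j) else _)
      rw [if_pos rfl]
      rw [if_pos rfl]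
      exact mul_comm _ _
    · show (if j = k then _ else if (i + 1 ≠ k ∧ ((i + 1 - k : Fin n) : ℕ) ≤ v j k)
          then s (E (k + 1) j k) else π' * s (E (k + 1) j k)) * (if k = i then π' else 1)
        = (if j = i then π' else 1) *
          (if j = k then _ else if (i ≠ k ∧ ((i - k : Fin n) : ℕ) ≤ v j k)
          then s (E (k + 1) j k) else π' * s (E (k + 1) j k))
      rw [if_neg hjk, if_neg hjk]
      have harc := stmt7_arc_succ i j k hjk
      by_cases hki : k = i
      · have hik : i = k := hki.symm
        have h1 : (i + 1 ≠ k ∧ ((i + 1 - k : Fin n) : ℕ) ≤ v j k) := harc.2 (Or.inl hik)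
        have hji : ¬ j = i := fun hc => hjk (hc.trans hki.symm)
        rw [if_pos h1, if_pos hki, if_neg hji,
          if_neg (show ¬(i ≠ k ∧ ((i - k : Fin n) : ℕ) ≤ v j k) from fun hc => hc.1 hik),
          one_mul]
        ring
      · by_cases hji : j = i
        · have h1 : ¬(i + 1 ≠ k ∧ ((i + 1 - k : Fin n) : ℕ) ≤ v j k) := by
            rw [harc]
            rintro (hc | ⟨_, _, hc⟩)
            · exact hki hc.symm
            · exact hc hji.symm
          have h2 : (i ≠ k ∧ ((i - k : Fin n) : ℕ) ≤ v j k) := by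
            refine ⟨fun hc => hki hc.symm, ?_⟩
            rw [← hji]
          rw [if_neg h1, if_pos h2, if_neg (fun hc : k = i => hki hc),
            if_pos hji, mul_one]
        · have hcond : (i + 1 ≠ k ∧ ((i + 1 - k : Fin n) : ℕ) ≤ v j k) ↔
              (i ≠ k ∧ ((i - k : Fin n) : ℕ) ≤ v j k) := by
            rw [harc]
            constructor
            · rintro (hc | ⟨hc1, hc2, _⟩)
              · exact absurd hc (fun h => hki h.symm)
              · exact ⟨hc1, hc2⟩
            · rintro ⟨hc1, hc2⟩
              exact Or.inr ⟨hc1, hc2, fun hc => hji hc.symm⟩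
          rw [if_neg (fun hc : k = i => hki hc), if_neg hji, mul_one, one_mul]
          exact if_congr hcond rfl rfl
  -- invertibility of the lifts
  have hinv : ∀ i, IsUnit (G i) := by
    intro i
    rw [Matrix.isUnit_iff_isUnit_det]
    set d := (G i).det with hd
    have h2 : IsUnit (mk d) := by
      have h3 : mk d = ((g0 i : Matrix (Fin n) (Fin n) (R ⧸ J))).det := by
        rw [hd, RingHom.map_det, RingHom.mapMatrix_apply, hred i]
      rw [h3]
      exact (Matrix.isUnit_iff_isUnit_det _).1 ⟨g0 i, rfl⟩
    obtain ⟨y, hy⟩ := Ideal.Quotient.mk_surjective (((h2.unit⁻¹ : (R ⧸ J)ˣ)) : R ⧸ J)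
    have h4 : mk (d * y - 1) = 0 := by
      rw [map_sub, map_mul, map_one,
        show (mk : R →+* R ⧸ J) y = ((h2.unit⁻¹ : (R ⧸ J)ˣ) : R ⧸ J) from hy]
      have h5 : (h2.unit : R ⧸ J) * ((h2.unit⁻¹ : (R ⧸ J)ˣ) : R ⧸ J) = 1 :=
        h2.unit.mul_inv
      rw [h2.unit_spec] at h5
      rw [h5, sub_self]
    have hmem : d * y - 1 ∈ J := Ideal.Quotient.eq_zero_iff_mem.1 h4
    have hnil : IsNilpotent (d * y - 1) := by
      refine ⟨K, ?_⟩
      have h5 : (d * y - 1) ^ K ∈ J ^ K := Ideal.pow_mem_pow hmem K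
      rw [hK] at h5
      simpa using h5
    have h6 : IsUnit (d * y) := by
      have h7 := IsNilpotent.isUnit_one_add hnil
      have h8 : 1 + (d * y - 1) = d * y := by ring
      rwa [h8] at h7
    exact isUnit_of_mul_isUnit_left h6
  refine ⟨fun i => (hinv i).unit, fun i => ?_, fun i => ?_⟩
  · show ((hinv (i + 1)).unit : Matrix (Fin n) (Fin n) R) * M i
      = M i * ((hinv i).unit : Matrix (Fin n) (Fin n) R)
    rw [(hinv (i + 1)).unit_spec, (hinv i).unit_spec]
    exact hcomm i
  · show (((hinv i).unit : Matrix (Fin n) (Fin n) R)).map (Ideal.Quotient.mk J)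
      = (g0 i : Matrix (Fin n) (Fin n) (R ⧸ J))
    rw [(hinv i).unit_spec]
    exact hred i
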